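/- Let O be a bounded measurable subset of ℝ^M, and let (fₙ), (gₙ) be sequences of measurable functions on O such that fₙ is uniformly bounded in L^∞(O), fₙ → f almost everywhere on O, and gₙ ⇀ g weakly in L¹(O). Then fₙ gₙ ⇀ f g weakly in L¹(O). -/

import Mathlib

open MeasureTheory Filter Topology

noncomputable def clampR (R a : ℝ) : ℝ := max (-R) (min R a)

lemma clampR_meas {α : Type*} [MeasurableSpace α] {w : α → ℝ} (hw : Measurable w) (R : ℝ) :
    Measurable (fun x => clampR R (w x)) :=
  measurable_const.max (measurable_const.min hw)

lemma abs_clampR_le {R a : ℝ} (hR : 0 ≤ R) : |clampR R a| ≤ R := by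
  rw [abs_le]
  constructor
  · exact le_max_left _ _
  · exact max_le (by linarith) (min_le_left _ _)

lemma abs_sub_clampR_le {R a : ℝ} (hR : 0 ≤ R) : |a - clampR R a| ≤ |a| := by
  have h1 : -|a| ≤ a := neg_abs_le a
  have h2 : a ≤ |a| := le_abs_self a
  have h0 : 0 ≤ |a| := abs_nonneg a
  rw [abs_le]
  constructor
  · have : clampR R a ≤ a + |a| := max_le (by linarith) (le_trans (min_le_right _ _) (by linarith))
    linarith
  · have : a - |a| ≤ clampR R a :=
      le_trans (le_min (by linarith) (by linarith)) (le_max_right _ _)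
    linarith

lemma abs_clampR_le_abs {R a : ℝ} (hR : 0 ≤ R) : |clampR R a| ≤ |a| := by
  have h1 := le_abs_self a
  have h2 := neg_abs_le a
  have h0 := abs_nonneg a
  rw [abs_le]
  constructor
  · exact le_trans (le_min (by linarith) h2) (le_max_right _ _)
  · exact max_le (by linarith) (le_trans (min_le_right _ _) h1)

lemma clampR_eq_self {R a : ℝ} (h : |a| ≤ R) : clampR R a = a := by
  rw [abs_le] at h
  rw [clampR, min_eq_right h.2, max_eq_right h.1]


variable {α : Type*} [MeasurableSpace α] {μ : Measure α}

lemma bdd_integrable [IsFiniteMeasure μ] {w : α → ℝ} (hm : Measurable w) {c : ℝ}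
    (hb : ∀ x, |w x| ≤ c) : Integrable w μ :=
  Integrable.mono' (integrable_const c) hm.aestronglyMeasurable
    (Eventually.of_forall (by simpa using hb))

lemma tail_tendsto {w : α → ℝ} (hm : Measurable w) (hi : Integrable w μ) :
    Tendsto (fun j : ℕ => ∫ x, |w x - clampR j (w x)| ∂μ) atTop (𝓝 0) := by
  have h0 : (0:ℝ) = ∫ x, (0:ℝ) ∂μ := by simp
  rw [h0]
  apply tendsto_integral_of_dominated_convergence (fun x => |w x|)
  · intro j
    exact ((hm.sub (clampR_meas hm _)).abs).aestronglyMeasurable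
  · exact hi.abs
  · intro j
    refine Eventually.of_forall fun x => ?_
    simpa using abs_sub_clampR_le (by positivity)
  · refine Eventually.of_forall fun x => ?_
    have : ∀ᶠ j : ℕ in atTop, |w x - clampR j (w x)| = 0 := by
      filter_upwards [eventually_ge_atTop (Nat.ceil |w x|)] with j hj
      rw [clampR_eq_self (le_trans (Nat.le_ceil _) (by exact_mod_cast hj)), sub_self, abs_zero]
    exact Tendsto.congr' (this.mono fun j h => h.symm) tendsto_const_nhds

lemma abs_continuity {w : α → ℝ} (hm : Measurable w) (hi : Integrable w μ) :
    ∀ ε > 0, ∃ δ > 0, ∀ E : Set α, MeasurableSet E → μ E < ENNReal.ofReal δ →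
      ∫ x in E, |w x| ∂μ ≤ ε := by
  intro ε hε
  obtain ⟨j, hj⟩ := (Metric.tendsto_atTop.1 (tail_tendsto hm hi) (ε/2) (by linarith)).imp
    (fun j h => h j le_rfl)
  rw [Real.dist_eq, sub_zero] at hj
  have htail : ∫ x, |w x - clampR j (w x)| ∂μ ≤ ε/2 :=
    le_trans (le_abs_self _) hj.le
  refine ⟨ε / (2 * (j+1)), by positivity, fun E hE hEμ => ?_⟩
  haveI : IsFiniteMeasure (μ.restrict E) := by
    constructor
    rw [Measure.restrict_apply_univ]
    exact hEμ.trans ENNReal.ofReal_lt_top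
  have hμE : (μ E).toReal ≤ ε / (2 * (j+1)) := by
    apply ENNReal.toReal_le_of_le_ofReal (by positivity) hEμ.le
  have hint1 : Integrable (fun x => |w x - clampR j (w x)|) μ :=
    ((hi.sub (hi.mono (clampR_meas hm _).aestronglyMeasurable
      (Eventually.of_forall fun x => by simpa using abs_clampR_le_abs (R := (j:ℝ)) (a := w x) (by positivity)))).abs)
  calc ∫ x in E, |w x| ∂μ
      ≤ ∫ x in E, (|w x - clampR j (w x)| + j) ∂μ := by
        apply integral_mono_ae (hi.abs.restrict) ((hint1.restrict).add (integrable_const _))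
        refine Eventually.of_forall fun x => ?_
        show |w x| ≤ |w x - clampR j (w x)| + j
        have h1 : |w x| ≤ |w x - clampR j (w x)| + |clampR j (w x)| := by
          calc |w x| = |(w x - clampR j (w x)) + clampR j (w x)| := by ring_nf
          _ ≤ _ := abs_add_le _ _
        have h2 : |clampR j (w x)| ≤ (j:ℝ) := abs_clampR_le (by positivity)
        linarith
    _ = (∫ x in E, |w x - clampR j (w x)| ∂μ) + (μ E).toReal * j := by
        rw [integral_add (hint1.restrict) (integrable_const _), setIntegral_const, smul_eq_mul, measureReal_def]
    _ ≤ ε/2 + (ε / (2 * (j+1))) * j := by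
        have hle : ∫ x in E, |w x - clampR j (w x)| ∂μ ≤ ∫ x, |w x - clampR j (w x)| ∂μ :=
          setIntegral_le_integral hint1 (Eventually.of_forall fun x => abs_nonneg _)
        have : (μ E).toReal * j ≤ (ε / (2 * (j+1))) * j := by
          apply mul_le_mul_of_nonneg_right hμE (by positivity)
        linarith
    _ ≤ ε := by
        have hj1 : (ε / (2 * (j+1))) * j ≤ ε/2 := by
          rw [div_mul_eq_mul_div, div_le_div_iff₀ (by positivity) (by norm_num)]
          nlinarith [hε.le, Nat.cast_nonneg (α := ℝ) j]
        linarith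

variable {α : Type*} [MeasurableSpace α] {μ : Measure α}

lemma exists_rep (u : Lp ℝ 1 μ) (hu : ∀ᵐ x ∂μ, |u x| ≤ 1) :
    ∃ w : α → ℝ, Measurable w ∧ (∀ x, |w x| ≤ 1) ∧ ⇑u =ᵐ[μ] w := by
  have h := (Lp.aestronglyMeasurable u).aemeasurable
  refine ⟨fun x => clampR 1 (h.mk u x), clampR_meas h.measurable_mk 1,
    fun x => abs_clampR_le one_pos.le, ?_⟩
  filter_upwards [hu, h.ae_eq_mk] with x h1 h2
  rw [← h2, clampR_eq_self h1]

lemma int_mul_bdd {g : α → ℝ} (hgi : Integrable g μ) {v : α → ℝ}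
    (hvm : AEStronglyMeasurable v μ) (hvb : ∀ᵐ x ∂μ, |v x| ≤ 1) :
    Integrable (fun x => g x * v x) μ :=
  Integrable.mono' hgi.abs (hgi.aestronglyMeasurable.mul hvm)
    (hvb.mono fun x hx => by
      rw [Real.norm_eq_abs, abs_mul]
      exact mul_le_of_le_one_right (abs_nonneg _) hx)

lemma Phi_continuous {g : α → ℝ} (hgm : Measurable g) (hgi : Integrable g μ) :
    Continuous (fun u : {u : Lp ℝ 1 μ // ∀ᵐ x ∂μ, |u x| ≤ 1} =>
      ∫ x, g x * (u : Lp ℝ 1 μ) x ∂μ) := by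
  rw [Metric.continuous_iff]
  intro u ε hε
  obtain ⟨j, hj⟩ : ∃ j : ℕ, ∫ x, |g x - clampR j (g x)| ∂μ ≤ ε/8 := by
    obtain ⟨N, hN⟩ := Metric.tendsto_atTop.1 (tail_tendsto hgm hgi) (ε/8) (by linarith)
    have := hN N le_rfl
    rw [Real.dist_eq, sub_zero] at this
    exact ⟨N, (le_abs_self _).trans this.le⟩
  have hclampi : Integrable (fun x => g x - clampR j (g x)) μ :=
    hgi.sub (hgi.mono (clampR_meas hgm _).aestronglyMeasurable
      (Eventually.of_forall fun x => by
        simpa using abs_clampR_le_abs (R := (j:ℝ)) (a := g x) (by positivity)))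
  refine ⟨ε / (4*(j+1)), by positivity, fun v hv => ?_⟩
  have hui : Integrable (⇑(u : Lp ℝ 1 μ)) μ := L1.integrable_coeFn _
  have hvi : Integrable (⇑(v : Lp ℝ 1 μ)) μ := L1.integrable_coeFn _
  have hdist : dist (v : Lp ℝ 1 μ) (u : Lp ℝ 1 μ) =
      ∫ x, |(v : Lp ℝ 1 μ) x - (u : Lp ℝ 1 μ) x| ∂μ := by
    rw [L1.dist_eq_integral_dist]
    exact integral_congr_ae (Eventually.of_forall fun x => Real.dist_eq _ _)
  rw [Real.dist_eq]
  have hint1 : Integrable (fun x => g x * (v : Lp ℝ 1 μ) x) μ := int_mul_bdd hgi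
    (Lp.aestronglyMeasurable _) v.2
  have hint2 : Integrable (fun x => g x * (u : Lp ℝ 1 μ) x) μ := int_mul_bdd hgi
    (Lp.aestronglyMeasurable _) u.2
  have hvu : Integrable (fun x => |(v : Lp ℝ 1 μ) x - (u : Lp ℝ 1 μ) x|) μ := by
    simpa [Pi.sub_apply] using (hvi.sub hui).abs
  rw [← integral_sub hint1 hint2]
  calc |∫ x, (g x * (v : Lp ℝ 1 μ) x - g x * (u : Lp ℝ 1 μ) x) ∂μ|
      ≤ ∫ x, |g x * (v : Lp ℝ 1 μ) x - g x * (u : Lp ℝ 1 μ) x| ∂μ := by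
        simpa using norm_integral_le_integral_norm
          (fun x => g x * (v : Lp ℝ 1 μ) x - g x * (u : Lp ℝ 1 μ) x)
    _ ≤ ∫ x, ((j:ℝ) * |(v : Lp ℝ 1 μ) x - (u : Lp ℝ 1 μ) x|
          + 2 * |g x - clampR j (g x)|) ∂μ := by
        apply integral_mono_ae (by simpa [Pi.sub_apply] using (hint1.sub hint2).abs)
          ((hvu.const_mul _).add (hclampi.abs.const_mul _))
        filter_upwards [u.2, v.2] with x hu1 hv1
        simp only [Pi.sub_apply, Pi.add_apply]
        have e1 : g x * (v : Lp ℝ 1 μ) x - g x * (u : Lp ℝ 1 μ) x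
            = clampR j (g x) * ((v : Lp ℝ 1 μ) x - (u : Lp ℝ 1 μ) x)
              + (g x - clampR j (g x)) * ((v : Lp ℝ 1 μ) x - (u : Lp ℝ 1 μ) x) := by ring
        rw [e1]
        calc |_ + _| ≤ |clampR j (g x) * ((v : Lp ℝ 1 μ) x - (u : Lp ℝ 1 μ) x)|
              + |(g x - clampR j (g x)) * ((v : Lp ℝ 1 μ) x - (u : Lp ℝ 1 μ) x)| := abs_add_le _ _
          _ ≤ (j:ℝ) * |(v : Lp ℝ 1 μ) x - (u : Lp ℝ 1 μ) x| + 2 * |g x - clampR j (g x)| := by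
              rw [abs_mul, abs_mul]
              have h1 : |clampR (j:ℝ) (g x)| ≤ (j:ℝ) := abs_clampR_le (by positivity)
              have h2 : |(v : Lp ℝ 1 μ) x - (u : Lp ℝ 1 μ) x| ≤ 2 := by
                calc |(v : Lp ℝ 1 μ) x - (u : Lp ℝ 1 μ) x|
                    ≤ |(v : Lp ℝ 1 μ) x| + |(u : Lp ℝ 1 μ) x| := abs_sub _ _
                  _ ≤ 2 := by linarith
              have h3 := abs_nonneg ((v : Lp ℝ 1 μ) x - (u : Lp ℝ 1 μ) x)
              have h4 := abs_nonneg (g x - clampR (j:ℝ) (g x))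
              nlinarith
    _ = (j:ℝ) * (∫ x, |(v : Lp ℝ 1 μ) x - (u : Lp ℝ 1 μ) x| ∂μ)
          + 2 * ∫ x, |g x - clampR j (g x)| ∂μ := by
        rw [integral_add (hvu.const_mul _) (hclampi.abs.const_mul _),
          integral_const_mul, integral_const_mul]
    _ < ε := by
        have hd : (∫ x, |(v : Lp ℝ 1 μ) x - (u : Lp ℝ 1 μ) x| ∂μ) < ε / (4*(j+1)) := by
          rw [← hdist]
          rw [Subtype.dist_eq] at hv
          exact hv
        have hj0 : (0:ℝ) ≤ j := by positivity
        have h5 : (j:ℝ) * (∫ x, |(v : Lp ℝ 1 μ) x - (u : Lp ℝ 1 μ) x| ∂μ)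
            ≤ (j:ℝ) * (ε / (4*(j+1))) := mul_le_mul_of_nonneg_left hd.le hj0
        have hq : (j:ℝ) * (ε / (4*(j+1))) ≤ ε/4 := by
          rw [mul_div_assoc', div_le_div_iff₀ (by positivity) (by norm_num)]
          nlinarith [hε.le]
        linarith

lemma baire_step [IsFiniteMeasure μ] (g : ℕ → α → ℝ) (hgm : ∀ n, Measurable (g n))
    (hgi : ∀ n, Integrable (g n) μ)
    (hconv : ∀ v : α → ℝ, Measurable v → (∀ x, |v x| ≤ 1) →
      CauchySeq (fun n => ∫ x, g n x * v x ∂μ))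
    (ε : ℝ) (hε : 0 < ε) :
    ∃ m : ℕ, ∃ δ > 0,
      (∀ n, m ≤ n → ∀ E : Set α, MeasurableSet E → μ E < ENNReal.ofReal δ →
        ∫ x in E, |g n x| ∂μ ≤ (∫ x in E, |g m x| ∂μ) + 2*ε) ∧
      (∃ B, ∀ n, ∫ x, |g n x| ∂μ ≤ B) := by
  classical
  set S : Set (Lp ℝ 1 μ) := {u | ∀ᵐ x ∂μ, |u x| ≤ 1} with hSdef
  have hmax_int : ∀ u : Lp ℝ 1 μ, Integrable (fun x => max (‖u x‖ - 1) 0) μ := fun u =>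
    Integrable.mono' (L1.integrable_coeFn u).abs
      ((((Lp.aestronglyMeasurable u).aemeasurable.norm.sub aemeasurable_const).max
        aemeasurable_const).aestronglyMeasurable)
      (Eventually.of_forall fun x => by
        rw [Real.norm_eq_abs (max _ _), abs_of_nonneg (le_max_right _ _), Real.norm_eq_abs]
        exact max_le (by linarith [abs_nonneg (u x)]) (abs_nonneg _))
  have hFlip : ∀ u v : Lp ℝ 1 μ,
      (∫ x, max (‖u x‖ - 1) 0 ∂μ) - (∫ x, max (‖v x‖ - 1) 0 ∂μ) ≤ dist u v := by
    intro u v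
    rw [← integral_sub (hmax_int u) (hmax_int v), L1.dist_eq_integral_dist]
    apply integral_mono_ae ((hmax_int u).sub (hmax_int v))
      (by simpa [dist_eq_norm, Pi.sub_apply]
        using ((L1.integrable_coeFn u).sub (L1.integrable_coeFn v)).norm)
    refine Eventually.of_forall fun x => ?_
    simp only [Pi.sub_apply]
    have h1 : |max (‖u x‖ - 1) 0 - max (‖v x‖ - 1) 0| ≤ |(‖u x‖ - 1) - (‖v x‖ - 1)| :=
      abs_max_sub_max_le_abs _ _ _
    rw [sub_sub_sub_cancel_right] at h1
    have h3 : |‖u x‖ - ‖v x‖| ≤ ‖u x - v x‖ := abs_norm_sub_norm_le _ _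
    have h4 := (le_abs_self (max (‖u x‖ - 1) 0 - max (‖v x‖ - 1) 0)).trans (h1.trans h3)
    show _ ≤ dist ((u : Lp ℝ 1 μ) x) ((v : Lp ℝ 1 μ) x)
    rw [dist_eq_norm]
    exact h4
  have hFcont : Continuous (fun u : Lp ℝ 1 μ => ∫ x, max (‖u x‖ - 1) 0 ∂μ) := by
    refine LipschitzWith.continuous (LipschitzWith.of_dist_le_mul (K := 1) fun u v => ?_)
    rw [Real.dist_eq, NNReal.coe_one, one_mul, abs_sub_le_iff]
    exact ⟨hFlip u v, by rw [dist_comm]; exact hFlip v u⟩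
  have hSclosed : IsClosed S := by
    have hSF : S = (fun u : Lp ℝ 1 μ => ∫ x, max (‖u x‖ - 1) 0 ∂μ) ⁻¹' {0} := by
      ext u
      simp only [Set.mem_preimage, Set.mem_singleton_iff, hSdef, Set.mem_setOf_eq]
      constructor
      · intro hu
        have h0 : (fun x => max (‖u x‖ - 1) 0) =ᵐ[μ] (fun _ => (0:ℝ)) := by
          filter_upwards [hu] with x hx
          rw [Real.norm_eq_abs]
          exact max_eq_right (by linarith)
        rw [integral_congr_ae h0, integral_const, smul_zero]
      · intro h0
        have hae := (integral_eq_zero_iff_of_nonneg_ae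
          (Eventually.of_forall fun x => le_max_right _ _) (hmax_int u)).1 h0
        filter_upwards [hae] with x hx
        have hx' : max (‖u x‖ - 1) 0 = 0 := hx
        have h1 : ‖u x‖ - 1 ≤ 0 := hx' ▸ le_max_left _ _
        rw [Real.norm_eq_abs] at h1
        linarith
    rw [hSF]
    exact isClosed_singleton.preimage hFcont
  haveI : CompleteSpace ↥S := hSclosed.completeSpace_coe
  haveI : BaireSpace ↥S := BaireSpace.of_completelyPseudoMetrizable
  haveI : Nonempty ↥S := ⟨⟨0, by
    filter_upwards [Lp.coeFn_zero ℝ 1 μ] with x hx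
    rw [hx]
    norm_num⟩⟩
  set Φ : ℕ → ↥S → ℝ := fun n u => ∫ x, g n x * (u : Lp ℝ 1 μ) x ∂μ with hΦdef
  have hΦc : ∀ n, Continuous (Φ n) := fun n => Phi_continuous (hgm n) (hgi n)
  set Fm : ℕ → Set ↥S := fun m => {u | ∀ n k, m ≤ n → m ≤ k → |Φ n u - Φ k u| ≤ ε} with hFmdef
  have hFmclosed : ∀ m, IsClosed (Fm m) := by
    intro m
    have : Fm m = ⋂ (n) (k) (_ : m ≤ n) (_ : m ≤ k), {u | |Φ n u - Φ k u| ≤ ε} := by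
      ext u
      simp only [hFmdef, Set.mem_setOf_eq, Set.mem_iInter]
    rw [this]
    exact isClosed_iInter fun n => isClosed_iInter fun k => isClosed_iInter fun _ =>
      isClosed_iInter fun _ =>
        isClosed_le (Continuous.abs ((hΦc n).sub (hΦc k))) continuous_const
  have hcover : ⋃ m, Fm m = Set.univ := by
    rw [Set.eq_univ_iff_forall]
    intro u
    have hu2 : ∀ᵐ x ∂μ, |(u : Lp ℝ 1 μ) x| ≤ 1 := u.2
    obtain ⟨w, hwm, hwb, hww⟩ := exists_rep (μ := μ) (u : Lp ℝ 1 μ) hu2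
    have hcs : CauchySeq (fun n => Φ n u) := by
      have hcs0 := hconv w hwm hwb
      have he : (fun n => Φ n u) = fun n => ∫ x, g n x * w x ∂μ := by
        funext n
        exact integral_congr_ae (hww.mono fun x hx => by dsimp only; rw [hx])
      rw [he]
      exact hcs0
    obtain ⟨N, hN⟩ := Metric.cauchySeq_iff.1 hcs ε hε
    exact Set.mem_iUnion.2 ⟨N, fun n k hn hk => by
      have := hN n hn k hk
      rw [Real.dist_eq] at this
      exact this.le⟩
  obtain ⟨m, hm⟩ := nonempty_interior_of_iUnion_of_closed hFmclosed hcover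
  obtain ⟨u₀, hu₀⟩ := hm
  obtain ⟨r, hr, hball⟩ := Metric.mem_nhds_iff.1 (mem_interior_iff_mem_nhds.1 hu₀)
  have hu₀2 : ∀ᵐ x ∂μ, |(u₀ : Lp ℝ 1 μ) x| ≤ 1 := u₀.2
  obtain ⟨w₀, hw₀m, hw₀b, hw₀e⟩ := exists_rep (μ := μ) (u₀ : Lp ℝ 1 μ) hu₀2
  have master : ∀ w : α → ℝ, Measurable w → (∀ x, |w x| ≤ 1) →
      (∫ x, |w x - w₀ x| ∂μ) < r → ∀ n k, m ≤ n → m ≤ k →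
      |(∫ x, g n x * w x ∂μ) - ∫ x, g k x * w x ∂μ| ≤ ε := by
    intro w hwm hwb hwr n k hn hk
    have hwi : Integrable w μ := bdd_integrable hwm hwb
    have hmem : (⟨hwi.toL1 w, by
        filter_upwards [hwi.coeFn_toL1] with x hx
        rw [hx]; exact hwb x⟩ : ↥S) ∈ Fm m := by
      apply hball
      rw [Metric.mem_ball, Subtype.dist_eq, L1.dist_eq_integral_dist]
      calc ∫ x, dist ((hwi.toL1 w) x) ((u₀ : Lp ℝ 1 μ) x) ∂μ
          = ∫ x, |w x - w₀ x| ∂μ := by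
            apply integral_congr_ae
            filter_upwards [hwi.coeFn_toL1, hw₀e] with x h1 h2
            rw [Real.dist_eq, h1, h2]
        _ < r := hwr
    have hkey := hmem n k hn hk
    have hre : ∀ j, Φ j (⟨hwi.toL1 w, by
        filter_upwards [hwi.coeFn_toL1] with x hx
        rw [hx]; exact hwb x⟩ : ↥S) = ∫ x, g j x * w x ∂μ := fun j =>
      integral_congr_ae (hwi.coeFn_toL1.mono fun x hx => by dsimp only; rw [hx])
    rwa [hre n, hre k] at hkey
  -- sign functions
  have hsign : ∀ n, ∃ s : α → ℝ, Measurable s ∧ (∀ x, |s x| ≤ 1) ∧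
      (∀ x, g n x * s x = |g n x|) := by
    intro n
    refine ⟨fun x => if 0 ≤ g n x then 1 else -1,
      Measurable.ite (measurableSet_le measurable_const (hgm n)) measurable_const
        measurable_const, fun x => ?_, fun x => ?_⟩
    · by_cases h : 0 ≤ g n x <;> simp [h]
    · by_cases h : 0 ≤ g n x
      · simp [h, abs_of_nonneg h]
      · push_neg at h
        simp [not_le.2 h, abs_of_neg h]
  have int_mul : ∀ (j : ℕ) (v : α → ℝ), Measurable v → (∀ x, |v x| ≤ 1) →
      Integrable (fun x => g j x * v x) μ := fun j v hvm hvb =>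
    int_mul_bdd (hgi j) hvm.aestronglyMeasurable (Eventually.of_forall hvb)
  refine ⟨m, r/4, by positivity, ?_, ?_⟩
  · -- uniform absolute continuity
    intro n hn E hE hEμ
    have hEtr : (μ E).toReal < r/4 := ENNReal.toReal_lt_of_lt_ofReal hEμ
    obtain ⟨s, hsm, hsb, hgs⟩ := hsign n
    set w₁ : α → ℝ := fun x => if x ∈ E then s x else w₀ x with hw₁def
    set w₂ : α → ℝ := fun x => if x ∈ E then 0 else w₀ x with hw₂def
    have hw₁m : Measurable w₁ := Measurable.ite hE hsm hw₀m
    have hw₂m : Measurable w₂ := Measurable.ite hE measurable_const hw₀m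
    have hw₁b : ∀ x, |w₁ x| ≤ 1 := fun x => by
      by_cases h : x ∈ E
      · simp only [hw₁def, if_pos h]; exact hsb x
      · simp only [hw₁def, if_neg h]; exact hw₀b x
    have hw₂b : ∀ x, |w₂ x| ≤ 1 := fun x => by
      by_cases h : x ∈ E
      · simp only [hw₂def, if_pos h]; norm_num
      · simp only [hw₂def, if_neg h]; exact hw₀b x
    have hclose : ∀ v : α → ℝ, Measurable v → (∀ x, |v x| ≤ 1) →
        (∀ x, x ∉ E → v x = w₀ x) → (∫ x, |v x - w₀ x| ∂μ) < r := by
      intro v hvm hvb hvout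
      have hpt : ∀ x, |v x - w₀ x| ≤ E.indicator (fun _ => (2:ℝ)) x := by
        intro x
        by_cases h : x ∈ E
        · rw [Set.indicator_of_mem h]
          calc |v x - w₀ x| ≤ |v x| + |w₀ x| := abs_sub _ _
            _ ≤ 2 := by linarith [hvb x, hw₀b x]
        · rw [Set.indicator_of_notMem h, hvout x h, sub_self, abs_zero]
      have hind_b : ∀ x, |E.indicator (fun _ => (2:ℝ)) x| ≤ 2 := by
        intro x
        by_cases h : x ∈ E <;> simp [h]
      calc ∫ x, |v x - w₀ x| ∂μ
          ≤ ∫ x, E.indicator (fun _ => (2:ℝ)) x ∂μ :=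
            integral_mono (bdd_integrable ((hvm.sub hw₀m).abs) (c := 2)
              (fun x => by rw [abs_abs]; exact (hpt x).trans ((le_abs_self _).trans (hind_b x))))
              (bdd_integrable (measurable_const.indicator hE) hind_b) hpt
        _ = (μ E).toReal • (2:ℝ) := integral_indicator_const _ hE
        _ < r := by
            rw [smul_eq_mul]
            linarith
    have h₁ := master w₁ hw₁m hw₁b
      (hclose w₁ hw₁m hw₁b (fun x hx => by simp only [hw₁def, if_neg hx])) n m hn le_rfl
    have h₂ := master w₂ hw₂m hw₂b
      (hclose w₂ hw₂m hw₂b (fun x hx => by simp only [hw₂def, if_neg hx])) n m hn le_rfl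
    have hdiff : ∀ j : ℕ, (∫ x, g j x * w₁ x ∂μ) - (∫ x, g j x * w₂ x ∂μ)
        = ∫ x in E, g j x * s x ∂μ := by
      intro j
      rw [← integral_sub (int_mul j w₁ hw₁m hw₁b) (int_mul j w₂ hw₂m hw₂b),
        ← integral_indicator hE]
      apply integral_congr_ae
      refine Eventually.of_forall fun x => ?_
      by_cases h : x ∈ E
      · rw [Set.indicator_of_mem h]
        simp only [hw₁def, hw₂def, if_pos h]
        ring
      · rw [Set.indicator_of_notMem h]
        simp only [hw₁def, hw₂def, if_neg h]
        ring
    have hEn : ∫ x in E, g n x * s x ∂μ = ∫ x in E, |g n x| ∂μ :=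
      integral_congr_ae (Eventually.of_forall fun x => hgs x)
    have hEm : ∫ x in E, g m x * s x ∂μ ≤ ∫ x in E, |g m x| ∂μ := by
      apply integral_mono ((int_mul m s hsm hsb).restrict) ((hgi m).abs.restrict)
      intro x
      calc g m x * s x ≤ |g m x * s x| := le_abs_self _
        _ ≤ |g m x| := by
          rw [abs_mul]
          exact mul_le_of_le_one_right (abs_nonneg _) (hsb x)
    have e1 := hdiff n
    have e2 := hdiff m
    rw [abs_le] at h₁ h₂
    linarith [h₁.1, h₁.2, h₂.1, h₂.2]
  · -- uniform boundedness
    set T := (μ Set.univ).toReal with hTdef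
    have hT : 0 ≤ T := ENNReal.toReal_nonneg
    set t := r / (2*T + r) with htdef
    have ht0 : 0 < t := div_pos hr (by linarith)
    have ht1 : t ≤ 1 := by
      rw [htdef, div_le_one (by linarith)]
      linarith
    have htT : 2*T*t < r := by
      rw [htdef, ← mul_div_assoc, div_lt_iff₀ (by linarith : (0:ℝ) < 2*T+r)]
      nlinarith
    have hbnd : ∀ n, m ≤ n → ∫ x, |g n x| ∂μ ≤ (∫ x, |g m x| ∂μ) + 2*ε/t := by
      intro n hn
      obtain ⟨s, hsm, hsb, hgs⟩ := hsign n
      set w : α → ℝ := fun x => (1-t)*w₀ x + t*s x with hwdef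
      have hwm : Measurable w := (hw₀m.const_mul _).add (hsm.const_mul _)
      have hwb : ∀ x, |w x| ≤ 1 := by
        intro x
        calc |w x| ≤ |(1-t)*w₀ x| + |t*s x| := abs_add_le _ _
          _ = (1-t)*|w₀ x| + t*|s x| := by
              rw [abs_mul, abs_mul, abs_of_nonneg (by linarith : (0:ℝ) ≤ 1-t),
                abs_of_nonneg ht0.le]
          _ ≤ (1-t)*1 + t*1 := add_le_add
              (mul_le_mul_of_nonneg_left (hw₀b x) (by linarith))
              (mul_le_mul_of_nonneg_left (hsb x) ht0.le)
          _ = 1 := by ring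
      have hpt : ∀ x, |w x - w₀ x| ≤ 2*t := by
        intro x
        have e : w x - w₀ x = t * (s x - w₀ x) := by rw [hwdef]; ring
        rw [e, abs_mul, abs_of_nonneg ht0.le]
        have h2 : |s x - w₀ x| ≤ 2 := by
          calc |s x - w₀ x| ≤ |s x| + |w₀ x| := abs_sub _ _
            _ ≤ 2 := by linarith [hsb x, hw₀b x]
        nlinarith [ht0.le]
      have hwr : (∫ x, |w x - w₀ x| ∂μ) < r := by
        calc ∫ x, |w x - w₀ x| ∂μ ≤ ∫ _x, (2*t : ℝ) ∂μ :=
            integral_mono (bdd_integrable ((hwm.sub hw₀m).abs)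
              (fun x => by rw [abs_abs]; exact hpt x)) (integrable_const _) hpt
          _ = T * (2*t) := by rw [integral_const, smul_eq_mul, hTdef, measureReal_def]
          _ < r := by nlinarith
      have h₁ := master w hwm hwb hwr n m hn le_rfl
      have h₀ := master w₀ hw₀m hw₀b (by simpa using hr) n m hn le_rfl
      have hlin : ∀ j : ℕ, (∫ x, g j x * w x ∂μ)
          = (1-t)*(∫ x, g j x * w₀ x ∂μ) + t*(∫ x, g j x * s x ∂μ) := by
        intro j
        have e : (fun x => g j x * w x) = fun x => (1-t)*(g j x * w₀ x) + t*(g j x * s x) := by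
          funext x
          rw [hwdef]
          ring
        rw [e, integral_add ((int_mul j w₀ hw₀m hw₀b).const_mul _)
          ((int_mul j s hsm hsb).const_mul _), integral_const_mul, integral_const_mul]
      have hsn : ∫ x, g n x * s x ∂μ = ∫ x, |g n x| ∂μ :=
        integral_congr_ae (Eventually.of_forall hgs)
      have hsm' : ∫ x, g m x * s x ∂μ ≤ ∫ x, |g m x| ∂μ := by
        apply integral_mono (int_mul m s hsm hsb) (hgi m).abs
        intro x
        calc g m x * s x ≤ |g m x * s x| := le_abs_self _
          _ ≤ |g m x| := by
            rw [abs_mul]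
            exact mul_le_of_le_one_right (abs_nonneg _) (hsb x)
      have l1 := abs_le.1 h₁
      have l0 := abs_le.1 h₀
      have iden : t * ((∫ x, |g n x| ∂μ) - (∫ x, g m x * s x ∂μ))
          = ((∫ x, g n x * w x ∂μ) - (∫ x, g m x * w x ∂μ))
            - (1-t)*((∫ x, g n x * w₀ x ∂μ) - (∫ x, g m x * w₀ x ∂μ)) := by
        rw [hlin n, hlin m, ← hsn]
        ring
      have hX1 : (1-t)*((∫ x, g n x * w₀ x ∂μ) - (∫ x, g m x * w₀ x ∂μ)) ≤ (1-t)*ε :=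
        mul_le_mul_of_nonneg_left l0.2 (by linarith)
      have hX2 : (1-t)*(-ε) ≤ (1-t)*((∫ x, g n x * w₀ x ∂μ) - (∫ x, g m x * w₀ x ∂μ)) :=
        mul_le_mul_of_nonneg_left l0.1 (by linarith)
      have key : t * ((∫ x, |g n x| ∂μ) - (∫ x, g m x * s x ∂μ)) ≤ 2*ε := by
        rw [iden]
        nlinarith [l1.2, hε.le, ht0.le, ht1]
      have hdiv : (∫ x, |g n x| ∂μ) - (∫ x, g m x * s x ∂μ) ≤ 2*ε/t := by
        rw [le_div_iff₀ ht0]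
        linarith [key]
      linarith [hsm']
    refine ⟨(Finset.range (m+1)).sum (fun j => ∫ x, |g j x| ∂μ) + 2*ε/t, fun n => ?_⟩
    have hnonneg : ∀ j, 0 ≤ ∫ x, |g j x| ∂μ := fun j => integral_nonneg fun x => abs_nonneg _
    rcases le_or_gt m n with h | h
    · have h1 := hbnd n h
      have h2 : (∫ x, |g m x| ∂μ) ≤ (Finset.range (m+1)).sum (fun j => ∫ x, |g j x| ∂μ) :=
        Finset.single_le_sum (f := fun j => ∫ x, |g j x| ∂μ) (fun j _ => hnonneg j)
          (Finset.self_mem_range_succ m)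
      linarith
    · have h2 : (∫ x, |g n x| ∂μ) ≤ (Finset.range (m+1)).sum (fun j => ∫ x, |g j x| ∂μ) :=
        Finset.single_le_sum (f := fun j => ∫ x, |g j x| ∂μ) (fun j _ => hnonneg j)
          (Finset.mem_range.2 (by omega))
      have h3 : 0 ≤ 2*ε/t := by positivity
      linarith
lemma unif_small [IsFiniteMeasure μ] (g : ℕ → α → ℝ) (hgm : ∀ n, Measurable (g n))
    (hgi : ∀ n, Integrable (g n) μ)
    (hconv : ∀ v : α → ℝ, Measurable v → (∀ x, |v x| ≤ 1) →
      CauchySeq (fun n => ∫ x, g n x * v x ∂μ)) :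
    ∀ ε > 0, ∃ δ > 0, ∀ (n : ℕ) (E : Set α), MeasurableSet E → μ E < ENNReal.ofReal δ →
      ∫ x in E, |g n x| ∂μ ≤ ε := by
  intro ε hε
  obtain ⟨m, δ₁, hδ₁, hUI, -⟩ := baire_step g hgm hgi hconv (ε/3) (by linarith)
  set W : α → ℝ := fun x => (Finset.range (m+1)).sum (fun j => |g j x|) with hW
  have hWm : Measurable W := Finset.measurable_sum _ (fun j _ => (hgm j).abs)
  have hWi : Integrable W μ := integrable_finset_sum _ (fun j _ => (hgi j).abs)
  obtain ⟨δ₂, hδ₂, hac⟩ := abs_continuity hWm hWi (ε/3) (by linarith)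
  refine ⟨min δ₁ δ₂, lt_min hδ₁ hδ₂, fun n E hE hEμ => ?_⟩
  have hE1 : μ E < ENNReal.ofReal δ₁ :=
    lt_of_lt_of_le hEμ (ENNReal.ofReal_le_ofReal (min_le_left _ _))
  have hE2 : μ E < ENNReal.ofReal δ₂ :=
    lt_of_lt_of_le hEμ (ENNReal.ofReal_le_ofReal (min_le_right _ _))
  have hWE : ∫ x in E, W x ∂μ ≤ ε/3 := by
    have h0 := hac E hE hE2
    have heq : ∫ x in E, |W x| ∂μ = ∫ x in E, W x ∂μ :=
      integral_congr_ae (Eventually.of_forall fun x =>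
        abs_of_nonneg (Finset.sum_nonneg fun j _ => abs_nonneg _))
    linarith
  have hjW : ∀ j, j ≤ m → ∫ x in E, |g j x| ∂μ ≤ ∫ x in E, W x ∂μ := fun j hj =>
    integral_mono ((hgi j).abs.restrict) (hWi.restrict) (fun x =>
      Finset.single_le_sum (f := fun i => |g i x|) (fun i _ => abs_nonneg _)
        (Finset.mem_range.2 (by omega)))
  rcases le_or_gt m n with h | h
  · have := hUI n h E hE hE1
    linarith [hjW m le_rfl]
  · linarith [hjW n (by omega)]

lemma key_lemma [IsFiniteMeasure μ] (g h : ℕ → α → ℝ) (hgm : ∀ n, Measurable (g n))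
    (hgi : ∀ n, Integrable (g n) μ)
    (hconv : ∀ v : α → ℝ, Measurable v → (∀ x, |v x| ≤ 1) →
      CauchySeq (fun n => ∫ x, g n x * v x ∂μ))
    (hhm : ∀ n, Measurable (h n)) (K : ℝ) (hhb : ∀ n, ∀ᵐ x ∂μ, |h n x| ≤ K)
    (hh0 : ∀ᵐ x ∂μ, Tendsto (fun n => h n x) atTop (𝓝 0)) :
    Tendsto (fun n => ∫ x, g n x * h n x ∂μ) atTop (𝓝 0) := by
  obtain ⟨m₀, δ₀, hδ₀, hUI₀, B, hB⟩ := baire_step g hgm hgi hconv 1 one_pos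
  have hB0 : 0 ≤ B := le_trans (integral_nonneg fun x => abs_nonneg _) (hB 0)
  set K' := max K 1 with hK'def
  have hK' : 0 < K' := lt_of_lt_of_le one_pos (le_max_right _ _)
  have hKK' : K ≤ K' := le_max_left _ _
  have habs : ∀ n, ∀ᵐ x ∂μ, |g n x * h n x| ≤ K' * |g n x| := by
    intro n
    filter_upwards [hhb n] with x hx
    rw [abs_mul]
    have h1 := abs_nonneg (g n x)
    nlinarith [hx.trans hKK', abs_nonneg (h n x)]
  have hint : ∀ n, Integrable (fun x => g n x * h n x) μ := fun n =>
    Integrable.mono' ((hgi n).abs.const_mul K') ((hgm n).mul (hhm n)).aestronglyMeasurable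
      (by filter_upwards [habs n] with x hx; rw [Real.norm_eq_abs]; exact hx)
  rw [Metric.tendsto_atTop]
  intro ε hε
  obtain ⟨δ, hδ, hUI⟩ := unif_small g hgm hgi hconv (ε/(4*K')) (by positivity)
  obtain ⟨t, htm, htμ, htu⟩ := tendstoUniformlyOn_of_ae_tendsto'
    (f := h) (g := fun _ => (0:ℝ)) (fun n => (hhm n).stronglyMeasurable)
    stronglyMeasurable_const hh0 (show 0 < δ/2 by linarith)
  have htμ' : μ t < ENNReal.ofReal δ :=
    lt_of_le_of_lt htμ ((ENNReal.ofReal_lt_ofReal_iff hδ).2 (by linarith))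
  set η := ε/(4*(B+1)) with hηdef
  have hη : 0 < η := by positivity
  obtain ⟨N, hN⟩ := eventually_atTop.1 ((Metric.tendstoUniformlyOn_iff.1 htu) η hη)
  refine ⟨N, fun n hn => ?_⟩
  rw [Real.dist_eq, sub_zero]
  have hsplit : ∫ x, g n x * h n x ∂μ
      = (∫ x in t, g n x * h n x ∂μ) + ∫ x in tᶜ, g n x * h n x ∂μ :=
    (integral_add_compl htm (hint n)).symm
  have h1 : |∫ x in t, g n x * h n x ∂μ| ≤ ε/4 := by
    calc |∫ x in t, g n x * h n x ∂μ| ≤ ∫ x in t, |g n x * h n x| ∂μ := by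
          have := norm_integral_le_integral_norm (μ := μ.restrict t)
            (fun x => g n x * h n x)
          simp only [Real.norm_eq_abs] at this
          exact this
      _ ≤ ∫ x in t, K' * |g n x| ∂μ :=
          integral_mono_ae ((hint n).abs.restrict) (((hgi n).abs.const_mul K').restrict)
            (ae_restrict_of_ae (habs n))
      _ = K' * ∫ x in t, |g n x| ∂μ := integral_const_mul _ _
      _ ≤ K' * (ε/(4*K')) := mul_le_mul_of_nonneg_left (hUI n t htm htμ') hK'.le
      _ = ε/4 := by field_simp
  have h2 : |∫ x in tᶜ, g n x * h n x ∂μ| ≤ η * B := by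
    calc |∫ x in tᶜ, g n x * h n x ∂μ| ≤ ∫ x in tᶜ, |g n x * h n x| ∂μ := by
          have := norm_integral_le_integral_norm (μ := μ.restrict tᶜ)
            (fun x => g n x * h n x)
          simp only [Real.norm_eq_abs] at this
          exact this
      _ ≤ ∫ x in tᶜ, η * |g n x| ∂μ := by
          apply integral_mono_ae ((hint n).abs.restrict)
            (((hgi n).abs.const_mul η).restrict)
          filter_upwards [ae_restrict_mem htm.compl] with x hx
          have hxd := hN n hn x hx
          rw [Real.dist_eq, zero_sub, abs_neg] at hxd
          rw [abs_mul]
          nlinarith [abs_nonneg (g n x), abs_nonneg (h n x)]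
      _ = η * ∫ x in tᶜ, |g n x| ∂μ := integral_const_mul _ _
      _ ≤ η * B := mul_le_mul_of_nonneg_left
          ((setIntegral_le_integral (hgi n).abs
            (Eventually.of_forall fun x => abs_nonneg _)).trans (hB n)) hη.le
  have hηB : η * B ≤ ε/4 := by
    rw [hηdef, div_mul_eq_mul_div, div_le_div_iff₀ (by positivity) (by norm_num)]
    nlinarith [hε.le]
  calc |∫ x, g n x * h n x ∂μ|
      = |(∫ x in t, g n x * h n x ∂μ) + ∫ x in tᶜ, g n x * h n x ∂μ| := by rw [← hsplit]
    _ ≤ |∫ x in t, g n x * h n x ∂μ| + |∫ x in tᶜ, g n x * h n x ∂μ| := abs_add_le _ _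
    _ < ε := by linarith
theorem stmt_4 (M : ℕ) (O : Set (Fin M → ℝ))
    (hO_bdd : Bornology.IsBounded O) (hO_meas : MeasurableSet O)
    (f : ℕ → (Fin M → ℝ) → ℝ) (flim : (Fin M → ℝ) → ℝ)
    (g : ℕ → (Fin M → ℝ) → ℝ) (glim : (Fin M → ℝ) → ℝ)
    (hf_meas : ∀ n, Measurable (f n)) (hflim_meas : Measurable flim)
    (hg_int : ∀ n, IntegrableOn (g n) O) (hglim_int : IntegrableOn glim O)
    (C : ℝ) (hf_bdd : ∀ n, ∀ᵐ x ∂(volume.restrict O), |f n x| ≤ C)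
    (hf_ae : ∀ᵐ x ∂(volume.restrict O), Tendsto (fun n => f n x) atTop (𝓝 (flim x)))
    (hg_weak : ∀ φ : (Fin M → ℝ) → ℝ, Measurable φ → (∃ Cφ, ∀ x, |φ x| ≤ Cφ) →
      Tendsto (fun n => ∫ x in O, g n x * φ x) atTop (𝓝 (∫ x in O, glim x * φ x))) :
    ∀ φ : (Fin M → ℝ) → ℝ, Measurable φ → (∃ Cφ, ∀ x, |φ x| ≤ Cφ) →
      Tendsto (fun n => ∫ x in O, f n x * g n x * φ x) atTop
        (𝓝 (∫ x in O, flim x * glim x * φ x)) := by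
  intro φ hφm hφb
  obtain ⟨Cφ, hCφ⟩ := hφb
  set μ : Measure (Fin M → ℝ) := volume.restrict O with hμdef
  haveI : IsFiniteMeasure μ := by
    constructor
    rw [hμdef, Measure.restrict_apply_univ]
    exact hO_bdd.measure_lt_top
  have hGex : ∀ n, ∃ Gn : (Fin M → ℝ) → ℝ, Measurable Gn ∧ g n =ᵐ[μ] Gn := fun n =>
    ⟨_, (hg_int n).aestronglyMeasurable.aemeasurable.measurable_mk,
      (hg_int n).aestronglyMeasurable.aemeasurable.ae_eq_mk⟩
  choose G hGm hGe using hGex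
  have hGi : ∀ n, Integrable (G n) μ := fun n => (hg_int n).congr (hGe n)
  set C' := max C 0 with hC'def
  have hC'0 : (0:ℝ) ≤ C' := le_max_right _ _
  set Cφ' := max Cφ 0 with hCφ'def
  have hCφ'0 : (0:ℝ) ≤ Cφ' := le_max_right _ _
  have hφb' : ∀ x, |φ x| ≤ Cφ' := fun x => (hCφ x).trans (le_max_left _ _)
  set fT : (Fin M → ℝ) → ℝ := fun x => clampR C' (flim x) with hfTdef
  have hfTm : Measurable fT := clampR_meas hflim_meas _
  have hfTb : ∀ x, |fT x| ≤ C' := fun x => abs_clampR_le hC'0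
  have hflim_bdd : ∀ᵐ x ∂μ, |flim x| ≤ C := by
    filter_upwards [ae_all_iff.2 hf_bdd, hf_ae] with x h1 h2
    exact le_of_tendsto h2.abs (Eventually.of_forall h1)
  have hTeq : ∀ᵐ x ∂μ, fT x = flim x := by
    filter_upwards [hflim_bdd] with x hx
    exact clampR_eq_self (hx.trans (le_max_left _ _))
  set h : ℕ → (Fin M → ℝ) → ℝ := fun n x => (f n x - fT x) * φ x with hhdef
  have hhm : ∀ n, Measurable (h n) := fun n => ((hf_meas n).sub hfTm).mul hφm
  have hhb : ∀ n, ∀ᵐ x ∂μ, |h n x| ≤ (C' + C') * Cφ' := by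
    intro n
    filter_upwards [hf_bdd n] with x hx
    show |(f n x - fT x) * φ x| ≤ (C' + C') * Cφ'
    rw [abs_mul]
    have h1 : |f n x - fT x| ≤ C' + C' :=
      (abs_sub _ _).trans (add_le_add (hx.trans (le_max_left _ _)) (hfTb x))
    nlinarith [abs_nonneg (f n x - fT x), abs_nonneg (φ x), hφb' x, hCφ'0]
  have hh0 : ∀ᵐ x ∂μ, Tendsto (fun n => h n x) atTop (𝓝 0) := by
    filter_upwards [hf_ae, hTeq] with x hx hT
    have ht : Tendsto (fun n => (f n x - fT x) * φ x) atTop (𝓝 ((flim x - fT x) * φ x)) :=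
      (hx.sub tendsto_const_nhds).mul_const _
    have ht2 : Tendsto (fun n => h n x) atTop (𝓝 ((flim x - fT x) * φ x)) := ht
    rwa [hT, sub_self, zero_mul] at ht2
  have hconv : ∀ v : (Fin M → ℝ) → ℝ, Measurable v → (∀ x, |v x| ≤ 1) →
      CauchySeq (fun n => ∫ x, G n x * v x ∂μ) := by
    intro v hvm hvb
    have he : (fun n => ∫ x, G n x * v x ∂μ) = fun n => ∫ x, g n x * v x ∂μ := by
      funext n
      exact (integral_congr_ae ((hGe n).mono fun x hx => by simp only [hx])).symm
    rw [he]
    exact (hg_weak v hvm ⟨1, hvb⟩).cauchySeq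
  have hkey : Tendsto (fun n => ∫ x, G n x * h n x ∂μ) atTop (𝓝 0) :=
    key_lemma G h hGm hGi hconv hhm _ hhb hh0
  set ψ : (Fin M → ℝ) → ℝ := fun x => fT x * φ x with hψdef
  have hψm : Measurable ψ := hfTm.mul hφm
  have hψb : ∀ x, |ψ x| ≤ C' * Cφ' := by
    intro x
    show |fT x * φ x| ≤ C' * Cφ'
    rw [abs_mul]
    exact mul_le_mul (hfTb x) (hφb' x) (abs_nonneg _) hC'0
  have hgψ : Tendsto (fun n => ∫ x, g n x * ψ x ∂μ) atTop (𝓝 (∫ x, glim x * ψ x ∂μ)) :=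
    hg_weak ψ hψm ⟨C' * Cφ', hψb⟩
  have hsum := hkey.add hgψ
  rw [zero_add] at hsum
  have hfe : ∀ n, (∫ x, G n x * h n x ∂μ) + (∫ x, g n x * ψ x ∂μ)
      = ∫ x, f n x * g n x * φ x ∂μ := by
    intro n
    have e1 : (∫ x, G n x * h n x ∂μ) = ∫ x, g n x * h n x ∂μ :=
      (integral_congr_ae ((hGe n).mono fun x hx => by simp only [hx])).symm
    have hi1 : Integrable (fun x => g n x * h n x) μ := by
      apply Integrable.mono' ((hg_int n).abs.const_mul ((C'+C')*Cφ'))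
        ((hg_int n).aestronglyMeasurable.mul (hhm n).aestronglyMeasurable)
      filter_upwards [hhb n] with x hx
      simp only [Pi.mul_apply]
      rw [Real.norm_eq_abs, abs_mul]
      nlinarith [abs_nonneg (g n x), abs_nonneg (h n x)]
    have hi2 : Integrable (fun x => g n x * ψ x) μ := by
      apply Integrable.mono' ((hg_int n).abs.const_mul (C'*Cφ'))
        ((hg_int n).aestronglyMeasurable.mul hψm.aestronglyMeasurable)
      refine Eventually.of_forall fun x => ?_
      simp only [Pi.mul_apply]
      rw [Real.norm_eq_abs, abs_mul]
      nlinarith [abs_nonneg (g n x), abs_nonneg (ψ x), hψb x]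
    rw [e1, ← integral_add hi1 hi2]
    apply integral_congr_ae
    refine Eventually.of_forall fun x => ?_
    show g n x * ((f n x - fT x) * φ x) + g n x * (fT x * φ x) = f n x * g n x * φ x
    ring
  have hfun : (fun n => (∫ x, G n x * h n x ∂μ) + (∫ x, g n x * ψ x ∂μ))
      = fun n => ∫ x, f n x * g n x * φ x ∂μ := funext hfe
  rw [hfun] at hsum
  have hlim : (∫ x, glim x * ψ x ∂μ) = ∫ x, flim x * glim x * φ x ∂μ := by
    apply integral_congr_ae
    filter_upwards [hTeq] with x hx
    show glim x * (fT x * φ x) = flim x * glim x * φ x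
    rw [hx]
    ring
  rw [hlim] at hsum
  exact hsum
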